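/- Let G be a finite non-cyclic group and C an inclusion-minimal generating set of G. If every edge of the Cayley graph Cay(G, C) lies in a triangle, then every element of C has order 3. -/

import Mathlib

/-- The undirected simple Cayley graph of a semigroup `S` with connection set `C`. -/
def cayleyGraph (S : Type*) [Semigroup S] (C : Set S) : SimpleGraph S where
  Adj a b := a ≠ b ∧ ∃ c ∈ C, (a * c = b ∨ b * c = a)
  symm := ⟨by
    rintro a b ⟨hne, c, hc, h⟩
    exact ⟨hne.symm, c, hc, h.symm⟩⟩
  loopless := ⟨fun a h => h.1 rfl⟩

/-- if `G` is a finite non-cyclic group and `C` is an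
inclusion-minimal generating set such that every edge of `Cay(G, C)` lies in a
triangle, then every element of `C` has order 3. -/
theorem minimal_gens_triangle_order_three {G : Type} [Group G] [Fintype G]
    (hnc : ¬ IsCyclic G) (C : Set G)
    (hgen : Subgroup.closure C = ⊤)
    (hmin : ∀ C' ⊂ C, Subgroup.closure C' ≠ ⊤)
    (htri : ∀ a b : G, (cayleyGraph G C).Adj a b →
      ∃ x : G, (cayleyGraph G C).Adj a x ∧ (cayleyGraph G C).Adj b x) :
    ∀ c ∈ C, orderOf c = 3 := by
  intro c hc
  -- removal lemma: no element of C lies in the closure of the rest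
  have rm : ∀ a ∈ C, a ∈ Subgroup.closure (C \ {a} : Set G) → False := by
    intro a ha hmem
    have hsub : C ⊆ (Subgroup.closure (C \ {a} : Set G) : Set G) := by
      intro y hy
      by_cases hya : y = a
      · exact hya ▸ hmem
      · exact Subgroup.subset_closure ⟨hy, hya⟩
    have htop : Subgroup.closure (C \ ({a} : Set G)) = ⊤ := by
      rw [eq_top_iff, ← hgen]
      exact (Subgroup.closure_le _).mpr hsub
    exact hmin _ (Set.sdiff_singleton_ssubset.mpr ha) htop
  have hc1 : c ≠ 1 := by
    rintro rfl
    exact rm 1 hc (Subgroup.one_mem _)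
  have hadj : (cayleyGraph G C).Adj 1 c := ⟨Ne.symm hc1, c, hc, Or.inl (one_mul c)⟩
  obtain ⟨x, ⟨hx1, d, hdC, hd⟩, ⟨hxc, e, heC, he⟩⟩ := htri 1 c hadj
  -- x = d or x = d⁻¹
  have hxd : x = d ∨ x = d⁻¹ := by
    rcases hd with h | h
    · left; rw [← h, one_mul]
    · right; exact eq_inv_of_mul_eq_one_left h
  have h3 : c ^ 3 = 1 := by
    by_cases hdc : d = c
    · -- the triangle vertex is c⁻¹
      have hxinv : x = c⁻¹ := by
        rcases hxd with h | h
        · exact absurd (hdc ▸ h).symm hxc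
        · rw [h, hdc]
      by_cases hec : e = c
      · rcases he with h | h
        · rw [hec, hxinv] at h
          rw [pow_succ, sq, h, inv_mul_cancel]
        · rw [hec, hxinv, inv_mul_cancel] at h
          exact absurd h.symm hc1
      · -- e would be a power of c, removable: contradiction
        exfalso
        apply rm e heC
        have hcm : c ∈ Subgroup.closure (C \ ({e} : Set G)) :=
          Subgroup.subset_closure ⟨hc, fun hh => hec ((hh : c = e)).symm⟩
        rcases he with h | h
        · rw [hxinv] at h
          have he' : e = c⁻¹ * c⁻¹ := eq_inv_mul_iff_mul_eq.mpr h
          nth_rewrite 2 [he']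
          exact Subgroup.mul_mem _ (Subgroup.inv_mem _ hcm) (Subgroup.inv_mem _ hcm)
        · rw [hxinv] at h
          have he' : e = c * c := inv_mul_eq_iff_eq_mul.mp h
          nth_rewrite 2 [he']
          exact Subgroup.mul_mem _ hcm hcm
    · -- d ≠ c forces e = c by minimality
      have hec : e = c := by
        by_contra hec
        apply rm c hc
        have hdm : d ∈ Subgroup.closure (C \ ({c} : Set G)) :=
          Subgroup.subset_closure ⟨hdC, fun hh => hdc (hh : d = c)⟩
        have hem : e ∈ Subgroup.closure (C \ ({c} : Set G)) :=
          Subgroup.subset_closure ⟨heC, fun hh => hec (hh : e = c)⟩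
        have hxm : x ∈ Subgroup.closure (C \ ({c} : Set G)) := by
          rcases hxd with h | h
          · exact h ▸ hdm
          · exact h ▸ Subgroup.inv_mem _ hdm
        rcases he with h | h
        · have hce : c = x * e⁻¹ := by rw [← h, mul_inv_cancel_right]
          nth_rewrite 2 [hce]
          exact Subgroup.mul_mem _ hxm (Subgroup.inv_mem _ hem)
        · nth_rewrite 2 [← h]
          exact Subgroup.mul_mem _ hxm hem
      rcases he with h | h
      · -- x = c * c; then d is a power of c, removable: contradiction
        exfalso
        apply rm d hdC
        have hcm : c ∈ Subgroup.closure (C \ ({d} : Set G)) :=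
          Subgroup.subset_closure ⟨hc, fun hh => hdc ((hh : c = d)).symm⟩
        rw [hec] at h
        rcases hxd with h' | h'
        · have hd2 : d = c * c := by rw [← h', h]
          nth_rewrite 2 [hd2]
          exact Subgroup.mul_mem _ hcm hcm
        · have hd2 : d = (c * c)⁻¹ := by rw [h]; rw [h', inv_inv]
          nth_rewrite 2 [hd2]
          exact Subgroup.inv_mem _ (Subgroup.mul_mem _ hcm hcm)
      · -- x * c = c forces x = 1, contradiction
        exfalso
        rw [hec] at h
        have : x * c = 1 * c := by rw [h, one_mul]
        exact hx1.symm (mul_right_cancel this)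
  have : Fact (Nat.Prime 3) := ⟨by norm_num⟩
  exact orderOf_eq_prime h3 hc1
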